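/- arXiv:2211.04105 — 5 statements merged into one kernel-verified Lean document; each statement's English description precedes it below -/
import Mathlib

section
/- In the uncapacitated single-market production-distribution game, the imputation x defined by x_i = α_1 · λ_i for all i ∈ N (where α_1 = max_{i∈N} α_i) lies in the core of the game (N, v); in particular the core is nonempty. -/
/-- In the uncapacitated single-market production-distribution game, the imputation
`x_i = α_1 · λ_i` (where `α_1 = max_i α_i`) lies in the core; in particular the core is
nonempty. -/
theorem uncap_single_market_core {n : ℕ} (hn : 0 < n) (α lam : Fin n → ℝ)
    (hmono : ∀ i j : Fin n, i ≤ j → α j ≤ α i) (hα : ∀ i, 0 ≤ α i)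
    (hlam : ∀ i, 0 ≤ lam i) (hsum : ∑ i, lam i = 1)
    (v : Finset (Fin n) → ℝ)
    (hv : ∀ (S : Finset (Fin n)) (hS : S.Nonempty),
        v S = (S.sup' hS α) * ∑ i ∈ S, lam i)
    (hv0 : v ∅ = 0)
    (x : Fin n → ℝ) (hx : ∀ i, x i = α ⟨0, hn⟩ * lam i) :
    (∑ i, x i = v Finset.univ) ∧ ∀ S : Finset (Fin n), v S ≤ ∑ i ∈ S, x i := by
  have hmax : ∀ (S : Finset (Fin n)) (hS : S.Nonempty), S.sup' hS α ≤ α ⟨0, hn⟩ := by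
    intro S hS
    apply Finset.sup'_le
    intro i _
    exact hmono ⟨0, hn⟩ i (Fin.mk_le_mk.mpr (Nat.zero_le _))
  have hxsum : ∀ S : Finset (Fin n), ∑ i ∈ S, x i = α ⟨0, hn⟩ * ∑ i ∈ S, lam i := by
    intro S
    rw [Finset.mul_sum]
    exact Finset.sum_congr rfl fun i _ => hx i
  have hne : (Finset.univ : Finset (Fin n)).Nonempty := ⟨⟨0, hn⟩, Finset.mem_univ _⟩
  constructor
  · rw [hxsum, hv Finset.univ hne]
    congr 1
    apply le_antisymm
    · exact Finset.le_sup' α (Finset.mem_univ _)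
    · exact hmax _ hne
  · intro S
    rcases S.eq_empty_or_nonempty with rfl | hS
    · simp [hv0]
    · rw [hv S hS, hxsum]
      apply mul_le_mul_of_nonneg_right (hmax S hS)
      exact Finset.sum_nonneg fun i _ => hlam i
end

section
/- In the uncapacitated multi-market production-distribution game with value function v(S) = Σ_{j∈M} (max_{i∈S} α_{ij}) · (Σ_{i∈S} d_{ij}) for nonempty S and v(∅) = 0, the imputation x defined by x_i = Σ_{j∈M} α*_j · d_{ij}, where α*_j = max_{i∈N} α_{ij}, lies in the core of (N, v); in particular the core of the uncapacitated multi-market production-distribution game is nonempty. -/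
/-- In the uncapacitated multi-market production-distribution game, the imputation
`x_i = Σ_{j∈M} α*_j · d_{ij}` with `α*_j = max_{i∈N} α_{ij}` lies in the core; in
particular the core is nonempty. -/
theorem uncap_multi_market_core {N M : Type} [Fintype N] [Fintype M] [Nonempty N]
    (α d : N → M → ℝ) (hα : ∀ i j, 0 ≤ α i j) (hd : ∀ i j, 0 ≤ d i j)
    (v : Finset N → ℝ)
    (hv : ∀ (S : Finset N) (hS : S.Nonempty),
        v S = ∑ j, (S.sup' hS fun i => α i j) * ∑ i ∈ S, d i j)
    (hv0 : v ∅ = 0)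
    (x : N → ℝ)
    (hx : ∀ i, x i = ∑ j, (Finset.univ.sup' Finset.univ_nonempty fun i' => α i' j) * d i j) :
    (∑ i, x i = v Finset.univ) ∧ ∀ S : Finset N, v S ≤ ∑ i ∈ S, x i := by
  have key : ∀ (S : Finset N), ∑ i ∈ S, x i
      = ∑ j, (Finset.univ.sup' Finset.univ_nonempty fun i' => α i' j) * ∑ i ∈ S, d i j := by
    intro S
    simp only [hx, Finset.mul_sum]
    rw [Finset.sum_comm]
  constructor
  · rw [hv Finset.univ Finset.univ_nonempty, key]
  · intro S
    rcases S.eq_empty_or_nonempty with rfl | hS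
    · simp [hv0]
    · rw [hv S hS, key]
      apply Finset.sum_le_sum
      intro j _
      apply mul_le_mul_of_nonneg_right
      · exact Finset.sup'_le _ _ fun i hi =>
          Finset.le_sup' (f := fun i' => α i' j) (Finset.mem_univ i)
      · exact Finset.sum_nonneg fun i _ => hd i j
end

section
/- Let N = {1,…,n}, let v : 2^N → ℝ, let F ⊆ N with 1 ∉ F, and let 𝓕 = {S ⊆ N : S ⊆ F or N∖F ⊆ S}. Let x ∈ ℝ^n and ε ∈ ℝ satisfy x(N∖{i}) = v(N∖{i}) + ε for every i ∉ F with i ≠ 1. Suppose there exists S̄ ⊆ N with S̄ ∉ 𝓕, 1 ∉ S̄, and x(S̄) = v(S̄) + ε. Then there exists y : 2^N → ℝ such that: (a) Σ_{S⊆N} y_S · χ^S = 0 (where χ^S ∈ ℝ^n is the characteristic vector of S); (b) Σ_{S ∉ 𝓕} y_S > 0; (c) y_S ≥ 0 for every S ∉ 𝓕; (d) y_S = 0 for every S ∉ 𝓕 with x(S) > v(S) + ε. -/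
/-- If the current solution `(x, ε)` of the leastcore LP has a tight coalition `S̄ ∉ 𝓕`
avoiding player 1, then the restricted primal of the primal-dual algorithm has a feasible
solution `y` of value `0` (witnessing optimality of `(x, ε)`). -/
theorem restricted_primal_value_zero {n : ℕ} (hn : 0 < n)
    (v : Finset (Fin n) → ℝ)
    (F : Finset (Fin n)) (h1F : (⟨0, hn⟩ : Fin n) ∉ F)
    (x : Fin n → ℝ) (ε : ℝ)
    (hx : ∀ i : Fin n, i ∉ F → i ≠ ⟨0, hn⟩ →
      ∑ k ∈ Finset.univ.erase i, x k = v (Finset.univ.erase i) + ε)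
    (Sbar : Finset (Fin n))
    (hSbarF : ¬(Sbar ⊆ F ∨ Finset.univ \ F ⊆ Sbar))
    (h1Sbar : (⟨0, hn⟩ : Fin n) ∉ Sbar)
    (hxSbar : ∑ k ∈ Sbar, x k = v Sbar + ε) :
    ∃ y : Finset (Fin n) → ℝ,
      (∀ i : Fin n, (∑ S : Finset (Fin n), if i ∈ S then y S else 0) = 0) ∧
      (0 < ∑ S ∈ Finset.univ.filter
          (fun S : Finset (Fin n) => ¬(S ⊆ F ∨ Finset.univ \ F ⊆ S)), y S) ∧
      (∀ S : Finset (Fin n), ¬(S ⊆ F ∨ Finset.univ \ F ⊆ S) → 0 ≤ y S) ∧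
      (∀ S : Finset (Fin n), ¬(S ⊆ F ∨ Finset.univ \ F ⊆ S) →
        v S + ε < ∑ k ∈ S, x k → y S = 0) := by
  set e : Fin n := ⟨0, hn⟩ with he
  set y : Finset (Fin n) → ℝ := fun S =>
    (if S = Sbar then (1:ℝ) else 0)
      + (∑ j ∈ Sbar, if S = Finset.univ.erase j then (1:ℝ) else 0)
      - (if S = Finset.univ then (Sbar.card : ℝ) else 0) with hy
  have hSne : Sbar ≠ Finset.univ := by
    intro h; exact h1Sbar (h ▸ Finset.mem_univ e)
  have herase_ne : ∀ j ∈ Sbar, Finset.univ.erase j ≠ Sbar := by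
    intro j hj h
    have hje : j ≠ e := fun hje => h1Sbar (hje ▸ hj)
    exact h1Sbar (h ▸ Finset.mem_erase.2 ⟨fun hhe => hje hhe.symm, Finset.mem_univ e⟩)
  have herase_ne_univ : ∀ j : Fin n, Finset.univ.erase j ≠ Finset.univ := by
    intro j h
    have := h ▸ Finset.mem_univ j
    exact (Finset.mem_erase.1 this).1 rfl
  have hySbar : y Sbar = 1 := by
    rw [hy]
    simp only [if_pos rfl, if_neg hSne]
    have : (∑ j ∈ Sbar, if Sbar = Finset.univ.erase j then (1:ℝ) else 0) = 0 := by
      apply Finset.sum_eq_zero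
      intro j hj
      exact if_neg (fun h => herase_ne j hj h.symm)
    simp [this]
  have hynn : ∀ S : Finset (Fin n), ¬(S ⊆ F ∨ Finset.univ \ F ⊆ S) → 0 ≤ y S := by
    intro S hS
    have hSu : S ≠ Finset.univ := by
      intro h; exact hS (Or.inr (h ▸ Finset.sdiff_subset))
    rw [hy]
    simp only [if_neg hSu]
    have h1 : (0:ℝ) ≤ if S = Sbar then (1:ℝ) else 0 := by positivity
    have h2 : (0:ℝ) ≤ ∑ j ∈ Sbar, if S = Finset.univ.erase j then (1:ℝ) else 0 := by
      apply Finset.sum_nonneg; intro j _; positivity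
    linarith
  refine ⟨y, ?_, ?_, hynn, ?_⟩
  · intro i
    have hsplit : ∀ S : Finset (Fin n), (if i ∈ S then y S else 0)
        = (if i ∈ S then (if S = Sbar then (1:ℝ) else 0) else 0)
          + (∑ j ∈ Sbar, if i ∈ S then (if S = Finset.univ.erase j then (1:ℝ) else 0) else 0)
          - (if i ∈ S then (if S = Finset.univ then (Sbar.card : ℝ) else 0) else 0) := by
      intro S
      by_cases h : i ∈ S
      · simp [hy, h]
      · simp [h]
    rw [Finset.sum_congr rfl (fun S _ => hsplit S)]
    rw [Finset.sum_sub_distrib, Finset.sum_add_distrib]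
    have t1 : (∑ S : Finset (Fin n), if i ∈ S then (if S = Sbar then (1:ℝ) else 0) else 0)
        = if i ∈ Sbar then 1 else 0 := by
      rw [Finset.sum_eq_single Sbar]
      · simp
      · intro S _ hS; simp [hS]
      · intro h; exact absurd (Finset.mem_univ Sbar) h
    have t3 : (∑ S : Finset (Fin n), if i ∈ S then (if S = Finset.univ then (Sbar.card:ℝ) else 0) else 0)
        = (Sbar.card : ℝ) := by
      rw [Finset.sum_eq_single Finset.univ]
      · simp
      · intro S _ hS; simp [hS]
      · intro h; exact absurd (Finset.mem_univ _) h
    have t2 : (∑ S : Finset (Fin n), ∑ j ∈ Sbar,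
          if i ∈ S then (if S = Finset.univ.erase j then (1:ℝ) else 0) else 0)
        = (Sbar.card : ℝ) - (if i ∈ Sbar then 1 else 0) := by
      rw [Finset.sum_comm]
      have inner : ∀ j ∈ Sbar, (∑ S : Finset (Fin n),
          if i ∈ S then (if S = Finset.univ.erase j then (1:ℝ) else 0) else 0)
          = if i = j then 0 else 1 := by
        intro j _
        rw [Finset.sum_eq_single (Finset.univ.erase j)]
        · by_cases h : i = j
          · simp [h]
          · simp [h, Finset.mem_erase]
        · intro S _ hS; simp [hS]
        · intro h; exact absurd (Finset.mem_univ _) h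
      rw [Finset.sum_congr rfl inner]
      by_cases h : i ∈ Sbar
      · rw [Finset.sum_eq_sum_sdiff_singleton_add h]
        have : ∀ j ∈ Sbar \ {i}, (if i = j then (0:ℝ) else 1) = 1 := by
          intro j hj
          have : i ≠ j := fun hh => ((Finset.mem_sdiff.1 hj).2 (by simp [hh.symm]))
          simp [this]
        rw [Finset.sum_congr rfl this]
        rw [Finset.sum_const, Finset.card_sdiff_of_subset (Finset.singleton_subset_iff.2 h)]
        have hc : 1 ≤ Sbar.card := Finset.card_pos.2 ⟨i, h⟩
        simp [h, Nat.cast_sub hc]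
      · have : ∀ j ∈ Sbar, (if i = j then (0:ℝ) else 1) = 1 := by
          intro j hj
          have : i ≠ j := fun hh => h (hh ▸ hj)
          simp [this]
        rw [Finset.sum_congr rfl this]
        simp [h]
    rw [t1, t2, t3]; ring
  · apply Finset.sum_pos' (fun S hS => hynn S (Finset.mem_filter.1 hS).2)
    exact ⟨Sbar, Finset.mem_filter.2 ⟨Finset.mem_univ _, hSbarF⟩, by rw [hySbar]; norm_num⟩
  · intro S hS hslack
    have hSu : S ≠ Finset.univ := fun h => hS (Or.inr (h ▸ Finset.sdiff_subset))
    have hSS : S ≠ Sbar := fun h => by rw [h, hxSbar] at hslack; linarith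
    rw [hy]
    simp only [if_neg hSu, if_neg hSS]
    have : (∑ j ∈ Sbar, if S = Finset.univ.erase j then (1:ℝ) else 0) = 0 := by
      apply Finset.sum_eq_zero
      intro j hj
      apply if_neg
      intro h
      -- S = erase j, j ∈ Sbar; show contradiction with slackness
      have hje : j ≠ e := fun hje => h1Sbar (hje ▸ hj)
      by_cases hjF : j ∈ F
      · -- then univ \ F ⊆ erase j, so S ∈ 𝓕
        apply hS
        right
        rw [h]
        intro k hk
        rw [Finset.mem_sdiff] at hk
        exact Finset.mem_erase.2 ⟨fun hh => hk.2 (hh ▸ hjF), Finset.mem_univ k⟩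
      · -- then erase j is tight
        have := hx j hjF hje
        rw [h] at hslack
        linarith
    rw [this]; ring
end

section
/- Let N = {1,…,n}, let F ⊆ N with 1 ∉ F and F ≠ N∖{1}, and let 𝓕 = {S ⊆ N : S ⊆ F or N∖F ⊆ S}. Define x̃ ∈ ℝ^n by x̃_1 = n − 1 − |F|, x̃_i = −1 for every i ∉ F with i ≠ 1, and x̃_i = 0 for every i ∈ F. Then: (a) x̃(S) = 0 for every S ∈ 𝓕; and (b) x̃(S) ≥ 1 for every S ⊆ N with 1 ∈ S and S ∉ 𝓕. -/
/-- The vector `x̃` with `x̃_1 = n − 1 − |F|`, `x̃_i = −1` for `i ∉ F`, `i ≠ 1`, and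
`x̃_i = 0` for `i ∈ F` satisfies `x̃(S) = 0` for all `S ∈ 𝓕` and `x̃(S) ≥ 1` for all
`S ∉ 𝓕` containing player 1. -/
theorem drp_optimal_solution {n : ℕ} (hn : 0 < n) (F : Finset (Fin n))
    (h1F : (⟨0, hn⟩ : Fin n) ∉ F) (hF : F ≠ Finset.univ.erase (⟨0, hn⟩ : Fin n))
    (xt : Fin n → ℝ)
    (hxt : ∀ i : Fin n, xt i =
      if i = (⟨0, hn⟩ : Fin n) then (n : ℝ) - 1 - F.card
      else if i ∈ F then 0 else -1) :
    (∀ S : Finset (Fin n), (S ⊆ F ∨ Finset.univ \ F ⊆ S) → ∑ i ∈ S, xt i = 0) ∧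
    (∀ S : Finset (Fin n), (⟨0, hn⟩ : Fin n) ∈ S →
      ¬(S ⊆ F ∨ Finset.univ \ F ⊆ S) → 1 ≤ ∑ i ∈ S, xt i) := by
  set z : Fin n := ⟨0, hn⟩ with hz
  have hxtF : ∀ i : Fin n, i ∈ F → xt i = 0 := by
    intro i hi
    have hne : i ≠ z := fun h => h1F (h ▸ hi)
    rw [hxt i, if_neg hne, if_pos hi]
  have hcard : F.card < n := by
    have h1 : F ⊆ Finset.univ.erase z := fun i hi =>
      Finset.mem_erase.mpr ⟨fun h => h1F (h ▸ hi), Finset.mem_univ i⟩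
    have := Finset.card_le_card h1
    simp [Finset.card_erase_of_mem, Finset.card_univ] at this
    omega
  have hzmem : z ∈ Finset.univ \ F := by simp [h1F]
  have hcardc : (Finset.univ \ F).card = n - F.card := by
    rw [Finset.card_sdiff_of_subset (Finset.subset_univ F), Finset.card_univ, Fintype.card_fin]
  constructor
  · rintro S (hS | hS)
    · exact Finset.sum_eq_zero fun i hi => hxtF i (hS hi)
    · have hsplit : S = (Finset.univ \ F) ∪ (S \ (Finset.univ \ F)) := by
        ext i
        simp only [Finset.mem_union, Finset.mem_sdiff, Finset.mem_univ, true_and]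
        constructor
        · intro h; tauto
        · rintro (h | h)
          · exact hS (by simp [h])
          · exact h.1
      rw [hsplit, Finset.sum_union Finset.disjoint_sdiff]
      have h2 : ∑ i ∈ S \ (Finset.univ \ F), xt i = 0 := by
        apply Finset.sum_eq_zero
        intro i hi
        simp only [Finset.mem_sdiff, Finset.mem_univ, true_and, not_not] at hi
        exact hxtF i hi.2
      rw [h2, add_zero, ← Finset.add_sum_erase _ _ hzmem]
      have h3 : ∑ i ∈ (Finset.univ \ F).erase z, xt i
          = -(((Finset.univ \ F).erase z).card : ℝ) := by
        rw [Finset.sum_congr rfl (fun i hi => ?_), Finset.sum_const, nsmul_eq_mul,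
          mul_neg_one]
        · simp only [Finset.mem_erase, Finset.mem_sdiff, Finset.mem_univ, true_and] at hi
          rw [hxt i, if_neg hi.1, if_neg hi.2]
      rw [h3, Finset.card_erase_of_mem hzmem, hcardc, hxt z, if_pos rfl]
      have h4 : ((n - F.card - 1 : ℕ) : ℝ) = (n : ℝ) - F.card - 1 := by
        have h5 : 1 ≤ n - F.card := by omega
        rw [Nat.cast_sub h5, Nat.cast_sub hcard.le, Nat.cast_one]
      rw [h4]; ring
  · intro S hzS hnot
    push_neg at hnot
    obtain ⟨j, hjmem, hjS⟩ := Finset.not_subset.mp hnot.2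
    simp only [Finset.mem_sdiff, Finset.mem_univ, true_and] at hjmem
    have hjz : j ≠ z := fun h => hjS (h ▸ hzS)
    rw [← Finset.add_sum_erase _ _ hzS, hxt z, if_pos rfl]
    set T : Finset (Fin n) := (S.erase z).filter (· ∉ F) with hT
    have hsum : ∑ i ∈ S.erase z, xt i = -(T.card : ℝ) := by
      rw [← Finset.sum_filter_add_sum_filter_not (S.erase z) (· ∈ F)]
      have e1 : ∑ i ∈ (S.erase z).filter (· ∈ F), xt i = 0 :=
        Finset.sum_eq_zero fun i hi => hxtF i (Finset.mem_filter.mp hi).2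
      have e2 : ∑ i ∈ (S.erase z).filter (¬ · ∈ F), xt i
          = -(((S.erase z).filter (¬ · ∈ F)).card : ℝ) := by
        rw [Finset.sum_congr rfl (fun i hi => ?_), Finset.sum_const, nsmul_eq_mul,
          mul_neg_one]
        · simp only [Finset.mem_filter, Finset.mem_erase] at hi
          rw [hxt i, if_neg hi.1.1, if_neg hi.2]
      rw [e1, e2, zero_add]
    rw [hsum]
    have hTsub : T ⊆ (((Finset.univ \ F).erase z).erase j) := by
      intro i hi
      simp only [hT, Finset.mem_filter, Finset.mem_erase] at hi
      refine Finset.mem_erase.mpr ⟨fun h => hjS (h ▸ hi.1.2), ?_⟩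
      exact Finset.mem_erase.mpr ⟨hi.1.1, by simp [hi.2]⟩
    have hjmem' : j ∈ (Finset.univ \ F).erase z :=
      Finset.mem_erase.mpr ⟨hjz, by simp [hjmem]⟩
    have hTcard : T.card ≤ n - F.card - 2 := by
      have := Finset.card_le_card hTsub
      rw [Finset.card_erase_of_mem hjmem', Finset.card_erase_of_mem hzmem, hcardc] at this
      omega
    have h2n : 2 ≤ n - F.card := by
      have := Finset.one_lt_card.mpr ⟨z, hzmem, j, by simp [hjmem, hjz.symm]⟩
      omega
    have hTcast : (T.card : ℝ) ≤ (n : ℝ) - F.card - 2 := by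
      calc (T.card : ℝ) ≤ ((n - F.card - 2 : ℕ) : ℝ) := by exact_mod_cast hTcard
        _ = (n : ℝ) - F.card - 2 := by
            rw [Nat.cast_sub h2n, Nat.cast_sub hcard.le]; norm_num
    linarith
end

section
/- Let E be a finite set, let P = {1,…,p} ⊆ E, let M ⊆ E with M ∩ P = ∅, and let V be a finite family of vectors in ℝ^E. Define 𝓕 := {S ⊆ P : χ^{S∪M} ∈ span(V)}, where χ^T ∈ ℝ^E denotes the characteristic vector of T ⊆ E. Let 0 ≤ j̄ ≤ p and S̄ = {1,…,j̄}, and suppose S̄ ∈ 𝓕. Let integers l̲ and l̄ satisfy 1 ≤ l̲ ≤ j̄ + 1 and j̄ ≤ l̄ ≤ p, and suppose S̄∖{l} ∈ 𝓕 for every l with l̲ ≤ l ≤ j̄, and S̄∪{l} ∈ 𝓕 for every l with j̄+1 ≤ l ≤ l̄. Then for every S̃ ⊆ {l̲,…,l̄}, the set {1,…,l̲−1} ∪ S̃ belongs to 𝓕. -/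
/-- Characteristic vector of a finite set, as a vector in `ℝ^E` with ground set `E = ℕ`. -/
noncomputable def chiVec (T : Finset ℕ) : ℕ → ℝ := fun e => if e ∈ T then 1 else 0

/-- Key linear-algebra step of the separation algorithm: if `S̄ = {1,…,j̄}` and all the
sets `S̄∖{l}` (`l̲ ≤ l ≤ j̄`) and `S̄∪{l}` (`j̄+1 ≤ l ≤ l̄`) have their characteristic
vectors (after union with `M`) in the span of `V`, then so does every set of the form
`{1,…,l̲−1} ∪ S̃` with `S̃ ⊆ {l̲,…,l̄}`. -/
theorem candidate_sets_in_span (E : Finset ℕ) (p : ℕ) (Mset : Finset ℕ)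
    (hPE : Finset.Icc 1 p ⊆ E) (hME : Mset ⊆ E)
    (hMP : Mset ∩ Finset.Icc 1 p = ∅)
    (V : Finset (ℕ → ℝ))
    (jbar : ℕ) (hjp : jbar ≤ p)
    (llo lhi : ℕ) (hlo1 : 1 ≤ llo) (hlo2 : llo ≤ jbar + 1)
    (hhi1 : jbar ≤ lhi) (hhi2 : lhi ≤ p)
    (hSbar : chiVec (Finset.Icc 1 jbar ∪ Mset) ∈
      Submodule.span ℝ (V : Set (ℕ → ℝ)))
    (hminus : ∀ l, llo ≤ l → l ≤ jbar →
      chiVec ((Finset.Icc 1 jbar).erase l ∪ Mset) ∈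
        Submodule.span ℝ (V : Set (ℕ → ℝ)))
    (hplus : ∀ l, jbar + 1 ≤ l → l ≤ lhi →
      chiVec (insert l (Finset.Icc 1 jbar) ∪ Mset) ∈
        Submodule.span ℝ (V : Set (ℕ → ℝ))) :
    ∀ St : Finset ℕ, St ⊆ Finset.Icc llo lhi →
      chiVec ((Finset.Icc 1 (llo - 1) ∪ St) ∪ Mset) ∈
        Submodule.span ℝ (V : Set (ℕ → ℝ)) := by
  intro St hSt
  classical
  set Sb := Finset.Icc 1 jbar with hSbdef
  set A := St.filter (fun l => jbar < l) with hA
  set D := (Finset.Icc llo jbar) \ St with hD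
  have hMe : ∀ e ∈ Mset, ¬ (1 ≤ e ∧ e ≤ p) := by
    intro e he h
    have : e ∈ Mset ∩ Finset.Icc 1 p := by
      simp [Finset.mem_inter, Finset.mem_Icc, he, h]
    rw [hMP] at this
    simp at this
  have key : chiVec ((Finset.Icc 1 (llo - 1) ∪ St) ∪ Mset)
      = chiVec (Sb ∪ Mset)
        + ∑ l ∈ A, (chiVec (insert l Sb ∪ Mset) - chiVec (Sb ∪ Mset))
        - ∑ l ∈ D, (chiVec (Sb ∪ Mset) - chiVec (Sb.erase l ∪ Mset)) := by
    funext e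
    have hAsum : ∑ l ∈ A, (chiVec (insert l Sb ∪ Mset) e - chiVec (Sb ∪ Mset) e)
        = if e ∈ A then (1:ℝ) else 0 := by
      rw [← Finset.sum_ite_eq' A e (fun _ => (1:ℝ))]
      apply Finset.sum_congr rfl
      intro l hl
      have hlA : l ∈ St ∧ jbar < l := by simpa [hA] using hl
      have hlSb : l ∉ Sb := by simp [hSbdef, Finset.mem_Icc]; omega
      have hlM : l ∉ Mset := by
        intro h
        have := hSt hlA.1
        simp [Finset.mem_Icc] at this
        exact hMe l h ⟨by omega, by omega⟩
      simp only [chiVec, Finset.mem_union, Finset.mem_insert]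
      by_cases h1 : e = l
      · subst h1; simp [hlSb, hlM]
      · by_cases h2 : e ∈ Sb <;> by_cases h3 : e ∈ Mset <;>
          simp [h1, h2, h3, Ne.symm h1]
    have hDsum : ∑ l ∈ D, (chiVec (Sb ∪ Mset) e - chiVec (Sb.erase l ∪ Mset) e)
        = if e ∈ D then (1:ℝ) else 0 := by
      rw [← Finset.sum_ite_eq' D e (fun _ => (1:ℝ))]
      apply Finset.sum_congr rfl
      intro l hl
      have hlD : l ∈ Finset.Icc llo jbar := by
        rw [hD] at hl; exact (Finset.mem_sdiff.mp hl).1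
      have hlb : llo ≤ l ∧ l ≤ jbar := by simpa [Finset.mem_Icc] using hlD
      have hlSb : l ∈ Sb := by simp [hSbdef, Finset.mem_Icc]; omega
      have hlM : l ∉ Mset := fun h => hMe l h ⟨by omega, by omega⟩
      simp only [chiVec, Finset.mem_union, Finset.mem_erase]
      by_cases h1 : e = l
      · subst h1; simp [hlSb, hlM]
      · by_cases h2 : e ∈ Sb <;> by_cases h3 : e ∈ Mset <;>
          simp [h1, h2, h3, Ne.symm h1]
    simp only [Pi.sub_apply, Pi.add_apply, Finset.sum_apply]
    rw [hAsum, hDsum]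
    have heSt : e ∈ St → llo ≤ e ∧ e ≤ lhi := by
      intro h; simpa [Finset.mem_Icc] using hSt h
    have heM : e ∈ Mset → ¬(1 ≤ e ∧ e ≤ p) := hMe e
    simp only [chiVec, Finset.mem_union, hA, hD, Finset.mem_filter,
      Finset.mem_sdiff, Finset.mem_Icc, hSbdef]
    by_cases h1 : e ∈ St <;> by_cases h2 : e ∈ Mset
    · have hb := heSt h1
      have hc := heM h2
      simp only [h1, h2, and_true, true_and, or_true, and_false, false_and,
        not_true_eq_false, if_true, if_false] at *
      split_ifs <;> first | (exfalso; omega) | norm_num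
    · have hb := heSt h1
      simp only [h1, h2, and_true, true_and, or_true, or_false, and_false,
        false_and, not_true_eq_false, if_true, if_false] at *
      split_ifs <;> first | (exfalso; omega) | norm_num
    · have hc := heM h2
      simp only [h1, h2, and_true, true_and, or_true, or_false, false_or,
        and_false, false_and, not_false_eq_true, if_true, if_false] at *
      split_ifs <;> first | (exfalso; omega) | norm_num
    · simp only [h1, h2, or_false, false_or, and_false, false_and,
        not_false_eq_true, and_true, true_and, if_false] at *
      split_ifs <;> first | (exfalso; omega) | norm_num
  rw [key]
  refine Submodule.sub_mem _ (Submodule.add_mem _ hSbar ?_) ?_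
  · apply Submodule.sum_mem
    intro l hl
    have hlA : l ∈ St ∧ jbar < l := by simpa [hA] using hl
    have := hSt hlA.1
    simp [Finset.mem_Icc] at this
    exact Submodule.sub_mem _ (hplus l (by omega) (by omega)) hSbar
  · apply Submodule.sum_mem
    intro l hl
    rw [hD, Finset.mem_sdiff, Finset.mem_Icc] at hl
    exact Submodule.sub_mem _ hSbar (hminus l hl.1.1 hl.1.2)
end
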